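/- Let (X,d) be a compact metric space and f : X → X a homeomorphism. If (X,f) is not minimal and has the gluing orbit property, then there exist points x, y ∈ X and ε > 0 such that: d(f^n(x), x) ≥ ε for every nonzero integer n; d(f^n(x), y) ≥ ε for every integer n ≥ 0; d(f^n(y), x) ≥ ε for every integer n ≥ 0; and d(f^n(y), y) ≥ ε for every integer n > 0. -/

import Mathlib

open Filter Set Metric
open Topology

namespace Paper

variable {X : Type*}

/-- Integer iteration of a homeomorphism: `f^n` for `n : ℤ`. -/
def zIter [TopologicalSpace X] (f : X ≃ₜ X) (n : ℤ) (x : X) : X :=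
  if 0 ≤ n then (⇑f)^[n.toNat] x else (⇑f.symm)^[(-n).toNat] x

/-- `(X,f)` is minimal: every (two-sided) orbit is dense. -/
def Minimal [TopologicalSpace X] (f : X ≃ₜ X) : Prop :=
  ∀ x : X, Dense (Set.range fun n : ℤ => zIter f n x)

/-- Topological transitivity. -/
def TopTransitive [TopologicalSpace X] (f : X ≃ₜ X) : Prop :=
  ∀ U V : Set X, IsOpen U → IsOpen V → U.Nonempty → V.Nonempty →
    ∃ n : ℤ, (U ∩ (zIter f n) ⁻¹' V).Nonempty

/-- Equicontinuity of the family of forward iterates. -/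
def EquicontinuousSystem [MetricSpace X] (f : X → X) : Prop :=
  ∀ ε : ℝ, 0 < ε → ∃ δ : ℝ, 0 < δ ∧
    ∀ x y : X, dist x y < δ → ∀ n : ℕ, dist (f^[n] x) (f^[n] y) < ε

/-- The transition times `s_j` (0-indexed: `s 0 = 0`,
`s (j+1) = s j + m_j + t_j - 1`) for an orbit sequence `C` (with lengths `m_j = (C j).2`)
and a gap `g`. -/
def sTimes (C : ℕ → X × ℕ) (g : ℕ → ℕ) : ℕ → ℕ
  | 0 => 0
  | j + 1 => sTimes C g j + (C j).2 + g j - 1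

/-- `(C, g)` (an orbit sequence of rank `k` together with a gap) is `ε`-shadowed by `z`. -/
def Shadows [MetricSpace X] (f : X → X) (k : ℕ) (C : ℕ → X × ℕ) (g : ℕ → ℕ)
    (ε : ℝ) (z : X) : Prop :=
  ∀ j < k, ∀ l < (C j).2, dist (f^[sTimes C g j + l] z) (f^[l] (C j).1) < ε

/-- The gluing orbit property. -/
def GluingOrbit [MetricSpace X] (f : X → X) : Prop :=
  ∀ ε : ℝ, 0 < ε → ∃ M : ℕ, 0 < M ∧
    ∀ k : ℕ, 0 < k → ∀ C : ℕ → X × ℕ, (∀ j < k, 0 < (C j).2) →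
      ∃ g : ℕ → ℕ, (∀ j < k - 1, 0 < g j ∧ g j ≤ M) ∧
        ∃ z : X, Shadows f k C g ε z

/-- The specification property, at scale `ε` with constant `M`. -/
def SpecWith [MetricSpace X] (f : X → X) (ε : ℝ) (M : ℕ) : Prop :=
  ∀ k : ℕ, 0 < k → ∀ C : ℕ → X × ℕ, (∀ j < k, 0 < (C j).2) →
    ∀ g : ℕ → ℕ, (∀ j < k - 1, M ≤ g j) →
      ∃ z : X, Shadows f k C g ε z

/-- The specification property. -/
def Specification [MetricSpace X] (f : X → X) : Prop :=
  ∀ ε : ℝ, 0 < ε → ∃ M : ℕ, 0 < M ∧ SpecWith f ε M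

/-- The periodic gluing orbit property. -/
def PerGluingOrbit [MetricSpace X] (f : X → X) : Prop :=
  ∀ ε : ℝ, 0 < ε → ∃ M : ℕ, 0 < M ∧
    ∀ k : ℕ, 0 < k → ∀ C : ℕ → X × ℕ, (∀ j < k, 0 < (C j).2) →
      ∃ t : ℕ, 0 < t ∧ t ≤ M ∧
        ∃ g : ℕ → ℕ, (∀ j < k - 1, 0 < g j ∧ g j ≤ M) ∧
          ∃ z : X, Shadows f k C g ε z ∧
            f^[sTimes C g (k - 1) + (C (k - 1)).2 + t] z = z

/-- `E` is an `(n,ε)`-separated set. -/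
def IsSepSet [MetricSpace X] (f : X → X) (n : ℕ) (ε : ℝ) (E : Set X) : Prop :=
  ∀ x ∈ E, ∀ y ∈ E, x ≠ y → ∃ k < n, ε < dist (f^[k] x) (f^[k] y)

/-- `s(n,ε)`: the maximal cardinality of an `(n,ε)`-separated subset of `X`. -/
noncomputable def sepNum [MetricSpace X] (f : X → X) (n : ℕ) (ε : ℝ) : ℕ :=
  sSup {N : ℕ | ∃ E : Finset X, IsSepSet f n ε ↑E ∧ E.card = N}

/-- Topological entropy `h(f) = lim_{ε → 0⁺} limsup_n (ln s(n,ε))/n`; since the inner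
quantity is monotone as `ε` decreases, the limit equals the supremum over `ε > 0`. -/
noncomputable def topEnt [MetricSpace X] (f : X → X) : EReal :=
  ⨆ (ε : ℝ) (_ : 0 < ε),
    Filter.limsup (fun n : ℕ => ((Real.log (sepNum f n ε) / n : ℝ) : EReal)) Filter.atTop

/-- The set of periodic points of period at most `n`. -/
def perPts (f : X → X) (n : ℕ) : Set X :=
  {x | ∃ m : ℕ, 0 < m ∧ m ≤ n ∧ f^[m] x = x}

open Classical in
/-- `p(f) = limsup_n (ln p_n(f))/n`, the exponential growth rate of periodic points
(`⊤` contributions when there are infinitely many such points). -/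
noncomputable def perGrowth (f : X → X) : EReal :=
  Filter.limsup (fun n : ℕ =>
      if h : (perPts f n).Finite then ((Real.log (perPts f n).ncard / n : ℝ) : EReal) else ⊤)
    Filter.atTop

/-- The lower box dimension of `X`, `liminf_{ε→0⁺} ln s(1,ε) / (-ln ε)`. -/
noncomputable def lowerBoxDim [MetricSpace X] (f : X → X) : EReal :=
  Filter.liminf (fun ε : ℝ => ((Real.log (sepNum f 1 ε) / (-Real.log ε) : ℝ) : EReal))
    (nhdsWithin 0 (Set.Ioi 0))



































/-! Semiflow case -/

/-- `φ` is a continuous semiflow on `X` (for nonnegative times). -/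
def IsSemiflow [TopologicalSpace X] (φ : ℝ → X → X) : Prop :=
  (∀ x : X, φ 0 x = x) ∧
    (∀ s t : ℝ, 0 ≤ s → 0 ≤ t → ∀ x : X, φ (s + t) x = φ s (φ t x)) ∧
      Continuous fun p : ℝ × X => φ p.1 p.2

/-- Minimality of a semiflow: every forward orbit is dense. -/
def MinimalFlow [TopologicalSpace X] (φ : ℝ → X → X) : Prop :=
  ∀ x : X, Dense {y : X | ∃ t : ℝ, 0 ≤ t ∧ φ t x = y}

/-- Transition times for the semiflow gluing: `s 0 = 0`, `s (j+1) = s j + m_j + t_j`. -/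
def sFlow (C : ℕ → X × ℝ) (g : ℕ → ℝ) : ℕ → ℝ
  | 0 => 0
  | j + 1 => sFlow C g j + (C j).2 + g j

/-- Gluing orbit property for a semiflow. -/
def GluingFlow [MetricSpace X] (φ : ℝ → X → X) : Prop :=
  ∀ ε : ℝ, 0 < ε → ∃ M : ℝ, 0 < M ∧
    ∀ k : ℕ, 0 < k → ∀ C : ℕ → X × ℝ, (∀ j < k, 0 ≤ (C j).2) →
      ∃ g : ℕ → ℝ, (∀ j < k - 1, 0 ≤ g j ∧ g j ≤ M) ∧
        ∃ z : X, ∀ j < k, ∀ t ∈ Set.Icc (0 : ℝ) (C j).2,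
          dist (φ (sFlow C g j + t) z) (φ t (C j).1) < ε

/-- `E` is a `(T,ε)`-separated set for the semiflow `φ`. -/
def IsSepFlow [MetricSpace X] (φ : ℝ → X → X) (T ε : ℝ) (E : Set X) : Prop :=
  ∀ x ∈ E, ∀ y ∈ E, x ≠ y → ∃ t ∈ Set.Icc (0 : ℝ) T, ε < dist (φ t x) (φ t y)

/-- `s(T,ε)` for the semiflow. -/
noncomputable def sepFlow [MetricSpace X] (φ : ℝ → X → X) (T ε : ℝ) : ℕ :=
  sSup {N : ℕ | ∃ E : Finset X, IsSepFlow φ T ε ↑E ∧ E.card = N}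

/-- Topological entropy of a semiflow. -/
noncomputable def topEntFlow [MetricSpace X] (φ : ℝ → X → X) : EReal :=
  ⨆ (ε : ℝ) (_ : 0 < ε),
    Filter.limsup (fun T : ℝ => ((Real.log (sepFlow φ T ε) / T : ℝ) : EReal)) Filter.atTop

lemma ziter_eq_pow [TopologicalSpace X] (f : X ≃ₜ X) (n : ℤ) (x : X) :
    zIter f n x = ((f.toEquiv ^ n : Equiv.Perm X)) x := by
  rcases n with m | m
  · simp [zIter, Equiv.Perm.coe_pow]
  · rw [zpow_negSucc]
    have hneg : ¬(0:ℤ) ≤ Int.negSucc m := not_le.mpr (Int.negSucc_lt_zero m)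
    simp only [zIter]
    rw [if_neg hneg]
    have : ((f.toEquiv ^ (m+1))⁻¹ : Equiv.Perm X) = (f.toEquiv.symm ^ (m+1) : Equiv.Perm X) := by
      rw [← inv_pow]; rfl
    rw [this]
    simp [Equiv.Perm.coe_pow]

lemma ziter_add [TopologicalSpace X] (f : X ≃ₜ X) (m n : ℤ) (x : X) :
    zIter f m (zIter f n x) = zIter f (m + n) x := by
  simp only [ziter_eq_pow, zpow_add, Equiv.Perm.mul_apply]

lemma ziter_natCast [TopologicalSpace X] (f : X ≃ₜ X) (n : ℕ) (x : X) :
    zIter f (n : ℤ) x = (⇑f)^[n] x := by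
  simp [zIter]

lemma ziter_continuous [TopologicalSpace X] (f : X ≃ₜ X) (n : ℤ) :
    Continuous (zIter f n) := by
  unfold zIter
  split
  · exact f.continuous.iterate _
  · exact f.symm.continuous.iterate _

lemma ziter_sub [TopologicalSpace X] (f : X ≃ₜ X) (a b : ℕ) (h : b ≤ a) (z : X) :
    zIter f (-(b:ℤ)) ((⇑f)^[a] z) = (⇑f)^[a - b] z := by
  rw [← ziter_natCast f a, ziter_add, ← ziter_natCast]
  congr 1; omega

lemma exists_pos_min {α : Type*} (s : Finset α) (g : α → ℝ) (h : ∀ a ∈ s, 0 < g a) :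
    ∃ c : ℝ, 0 < c ∧ ∀ a ∈ s, c ≤ g a := by
  classical
  set t : Finset ℝ := insert 1 (s.image g) with ht
  have htne : t.Nonempty := ⟨1, Finset.mem_insert_self _ _⟩
  refine ⟨t.min' htne, ?_, ?_⟩
  · have := t.min'_mem htne
    rcases Finset.mem_insert.mp this with h1 | h2
    · rw [h1]; norm_num
    · obtain ⟨a, ha, hae⟩ := Finset.mem_image.mp h2
      rw [← hae]
      exact h a ha
  · intro a ha
    exact t.min'_le _ (Finset.mem_insert_of_mem (Finset.mem_image_of_mem g ha))


theorem stmt9 [MetricSpace X] [CompactSpace X] (f : X ≃ₜ X)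
    (hnm : ¬ Minimal f) (hgo : GluingOrbit (⇑f)) :
    ∃ x y : X, ∃ ε : ℝ, 0 < ε ∧
      (∀ n : ℤ, n ≠ 0 → ε ≤ dist (zIter f n x) x) ∧
      (∀ n : ℕ, ε ≤ dist ((⇑f)^[n] x) y) ∧
      (∀ n : ℕ, ε ≤ dist ((⇑f)^[n] y) x) ∧
      (∀ n : ℕ, 0 < n → ε ≤ dist ((⇑f)^[n] y) y) := by
  classical
  simp only [Minimal, not_forall] at hnm
  obtain ⟨p, hp⟩ := hnm
  set Y : Set X := closure (Set.range fun n : ℤ => zIter f n p) with hYdef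
  have hYne : Y.Nonempty := ⟨p, subset_closure ⟨(0:ℤ), by simp [zIter]⟩⟩
  have hq' : ∃ q, q ∉ Y := by
    by_contra h
    push_neg at h
    exact hp (fun x => h x)
  obtain ⟨q, hq⟩ := hq'
  have hr : 0 < infDist q Y := (IsClosed.notMem_iff_infDist_pos isClosed_closure hYne).mp hq
  set r : ℝ := infDist q Y with hrdef
  set ε : ℝ := r / 4 with hedef
  have hε : 0 < ε := by positivity
  obtain ⟨M, hM, hspec⟩ := hgo ε hε
  have hmem : ∀ l : ℕ, (⇑f)^[l] p ∈ Y := fun l => subset_closure ⟨(l:ℤ), ziter_natCast f l p⟩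
  have hDle : ∀ (z : X) (l : ℕ), dist z ((⇑f)^[l] p) < ε → infDist z Y ≤ ε :=
    fun z l h => le_trans (infDist_le_dist_of_mem (hmem l)) h.le
  have hfar : ∀ z : X, dist z q ≤ ε → 3 * ε ≤ infDist z Y := by
    intro z hz
    have h1 : infDist q Y ≤ infDist z Y + dist q z := infDist_le_infDist_add_dist
    rw [dist_comm] at h1
    have h2 : r = 4 * ε := by rw [hedef]; ring
    linarith
  -- ===== construction of x =====
  have HX : ∀ n : ℕ, ∃ w : X, dist w q < ε ∧
      (∀ j : ℕ, M ≤ j → j ≤ n + 1 → infDist (zIter f (-(j:ℤ)) w) Y ≤ ε) ∧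
      (∀ j : ℕ, M ≤ j → j ≤ n + 1 → infDist ((⇑f)^[j] w) Y ≤ ε) := by
    intro n
    set C : ℕ → X × ℕ := fun j => if j = 1 then (q, 1) else (p, n + 1) with hC
    have hCpos : ∀ j < 3, 0 < (C j).2 := by
      intro j _
      by_cases h : j = 1 <;> simp [hC, h]
    obtain ⟨g, hg, z, hz⟩ := hspec 3 (by norm_num) C hCpos
    obtain ⟨hg01, hg02⟩ := hg 0 (by norm_num)
    obtain ⟨hg11, hg12⟩ := hg 1 (by norm_num)
    have hs1 : sTimes C g 1 = n + g 0 := by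
      show sTimes C g 0 + (C 0).2 + g 0 - 1 = n + g 0
      have h1 : (C 0).2 = n + 1 := by simp [hC]
      rw [h1]
      show 0 + (n+1) + g 0 - 1 = n + g 0
      omega
    have hs2 : sTimes C g 2 = n + g 0 + g 1 := by
      show sTimes C g 1 + (C 1).2 + g 1 - 1 = n + g 0 + g 1
      have h1 : (C 1).2 = 1 := by simp [hC]
      rw [hs1, h1]
      omega
    refine ⟨(⇑f)^[n + g 0] z, ?_, ?_, ?_⟩
    · have h1 := hz 1 (by norm_num) 0 (by simp [hC])
      rw [hs1] at h1
      simpa [hC] using h1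
    · intro j hMj hjn
      have hjle : j ≤ n + g 0 := by omega
      rw [ziter_sub f _ j hjle]
      have hlt : n + g 0 - j < n + 1 := by omega
      have h1 := hz 0 (by norm_num) (n + g 0 - j) (by simpa [hC] using hlt)
      have h0 : sTimes C g 0 + (n + g 0 - j) = n + g 0 - j := by
        show 0 + _ = _
        omega
      rw [h0] at h1
      exact hDle _ (n + g 0 - j) (by simpa [hC] using h1)
    · intro j hMj hjn
      have hiter : (⇑f)^[j] ((⇑f)^[n + g 0] z) = (⇑f)^[j + (n + g 0)] z :=
        (Function.iterate_add_apply _ j (n + g 0) z).symm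
      have hrw : j + (n + g 0) = sTimes C g 2 + (j - g 1) := by
        rw [hs2]; omega
      have hlt : j - g 1 < n + 1 := by omega
      have h1 := hz 2 (by norm_num) (j - g 1) (by simpa [hC] using hlt)
      rw [hiter, hrw]
      exact hDle _ (j - g 1) (by simpa [hC] using h1)
  choose w hw1 hw2 hw3 using HX
  obtain ⟨x, -, φ, hφ, hφt⟩ :=
    IsCompact.tendsto_subseq (x := w) isCompact_univ (fun n => mem_univ _)
  have hX1 : dist x q ≤ ε :=
    le_of_tendsto (hφt.dist tendsto_const_nhds)
      (Eventually.of_forall fun k => (hw1 (φ k)).le)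
  have hX3 : ∀ j : ℕ, M ≤ j → infDist (zIter f (-(j:ℤ)) x) Y ≤ ε := by
    intro j hj
    have hT : Tendsto (fun k => infDist (zIter f (-(j:ℤ)) (w (φ k))) Y) atTop
        (𝓝 (infDist (zIter f (-(j:ℤ)) x) Y)) :=
      (((continuous_infDist_pt Y).comp (ziter_continuous f (-(j:ℤ)))).tendsto x).comp hφt
    refine le_of_tendsto hT (eventually_atTop.mpr ⟨j, fun k hk => ?_⟩)
    exact hw2 (φ k) j hj (le_trans (le_trans hk hφ.le_apply) (Nat.le_succ _))
  have hX2 : ∀ j : ℕ, M ≤ j → infDist ((⇑f)^[j] x) Y ≤ ε := by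
    intro j hj
    have hT : Tendsto (fun k => infDist ((⇑f)^[j] (w (φ k))) Y) atTop
        (𝓝 (infDist ((⇑f)^[j] x) Y)) :=
      (((continuous_infDist_pt Y).comp (f.continuous.iterate j)).tendsto x).comp hφt
    refine le_of_tendsto hT (eventually_atTop.mpr ⟨j, fun k hk => ?_⟩)
    exact hw3 (φ k) j hj (le_trans (le_trans hk hφ.le_apply) (Nat.le_succ _))
  have hXz : ∀ n : ℤ, M ≤ n.natAbs → infDist (zIter f n x) Y ≤ ε := by
    intro n hn
    rcases le_or_gt 0 n with h | h
    · have hcast : n = ((n.toNat : ℕ) : ℤ) := by omega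
      rw [hcast, ziter_natCast]
      exact hX2 n.toNat (by omega)
    · have hcast : n = -(((-n).toNat : ℕ) : ℤ) := by omega
      rw [hcast]
      exact hX3 (-n).toNat (by omega)
  -- ===== construction of y =====
  have HY : ∀ n : ℕ, ∃ v : X, dist v q < ε ∧
      (∀ j : ℕ, M ≤ j → j ≤ n + 1 → infDist ((⇑f)^[j] v) Y ≤ ε) ∧
      (∀ B : ℕ, M ≤ B → B ≤ n → ∃ c : ℕ, B ≤ c ∧ c < B + M ∧
        dist (zIter f (-(c:ℤ)) v) q < ε) := by
    intro n
    set C : ℕ → X × ℕ := fun j => if j ≤ n then (q, 1) else (p, n + 1) with hC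
    have hCpos : ∀ j < n + 2, 0 < (C j).2 := by
      intro j _
      by_cases h : j ≤ n <;> simp [hC, h]
    obtain ⟨g, hg, z, hz⟩ := hspec (n + 2) (by omega) C hCpos
    have hgj : ∀ j ≤ n, 0 < g j ∧ g j ≤ M := fun j hj => hg j (by omega)
    have hrec : ∀ j, j ≤ n → sTimes C g (j+1) = sTimes C g j + g j := by
      intro j hj
      show sTimes C g j + (C j).2 + g j - 1 = sTimes C g j + g j
      have h1 : (C j).2 = 1 := by simp [hC, hj]
      rw [h1]
      have := (hgj j hj).1
      omega
    have hval : ∀ j, j ≤ n + 1 → sTimes C g j = ∑ i ∈ Finset.range j, g i := by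
      intro j
      induction j with
      | zero => intro _; rfl
      | succ m ih =>
        intro hm
        rw [hrec m (by omega), ih (by omega), Finset.sum_range_succ]
    have hmono : ∀ a b : ℕ, a ≤ b → b ≤ n + 1 → sTimes C g a ≤ sTimes C g b := by
      intro a b hab hbn
      rw [hval a (by omega), hval b hbn]
      exact Finset.sum_le_sum_of_subset (Finset.range_subset_range.mpr hab)
    have hlow : ∀ j, j ≤ n + 1 → j ≤ sTimes C g j := by
      intro j hj
      rw [hval j hj]
      calc j = ∑ _i ∈ Finset.range j, 1 := by simp
        _ ≤ ∑ i ∈ Finset.range j, g i :=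
          Finset.sum_le_sum (fun i hi => (hgj i (by
            have := Finset.mem_range.mp hi; omega)).1)
    refine ⟨(⇑f)^[sTimes C g n] z, ?_, ?_, ?_⟩
    · have hbl : C n = (q, 1) := by simp [hC]
      have h1 := hz n (by omega) 0 (by rw [hbl]; norm_num)
      rw [hbl] at h1
      simpa using h1
    · intro j hMj hjn
      obtain ⟨hgn1, hgn2⟩ := hgj n le_rfl
      have hiter : (⇑f)^[j] ((⇑f)^[sTimes C g n] z) = (⇑f)^[j + sTimes C g n] z :=
        (Function.iterate_add_apply _ _ _ _).symm
      have hrw : j + sTimes C g n = sTimes C g (n+1) + (j - g n) := by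
        rw [hrec n le_rfl]; omega
      have hlt : j - g n < n + 1 := by omega
      have hbl : C (n+1) = (p, n + 1) := by simp [hC]
      have h1 := hz (n+1) (by omega) (j - g n) (by rw [hbl]; exact hlt)
      rw [hbl] at h1
      rw [hiter, hrw]
      exact hDle _ (j - g n) h1
    · intro B hMB hBn
      have hlown : n ≤ sTimes C g n := hlow n (by omega)
      have hs0 : sTimes C g 0 = 0 := rfl
      set P : ℕ → Prop := fun i => B ≤ sTimes C g n - sTimes C g i with hPdef
      have hP0 : P 0 := by simp only [hPdef]; omega
      have hPi0 : P (Nat.findGreatest P n) := Nat.findGreatest_spec (P := P) (Nat.zero_le n) hP0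
      set i := Nat.findGreatest P n with hi
      have hPi : B ≤ sTimes C g n - sTimes C g i := hPi0
      have hin : i ≤ n := Nat.findGreatest_le n
      have hiltn : i < n := by
        by_contra h
        have hieq : i = n := by omega
        rw [hieq] at hPi
        omega
      have hnotP0 : ¬ P (i + 1) :=
        Nat.findGreatest_is_greatest (Nat.lt_succ_self i) (by omega)
      have hnotP : ¬ B ≤ sTimes C g n - sTimes C g (i+1) := hnotP0
      obtain ⟨hgi1, hgi2⟩ := hgj i (by omega)
      have hr1 : sTimes C g (i+1) = sTimes C g i + g i := hrec i (by omega)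
      have hle1 : sTimes C g i ≤ sTimes C g n := hmono i n (by omega) (by omega)
      have hle2 : sTimes C g (i+1) ≤ sTimes C g n := hmono (i+1) n (by omega) (by omega)
      refine ⟨sTimes C g n - sTimes C g i, hPi, by omega, ?_⟩
      have hidx : sTimes C g n - (sTimes C g n - sTimes C g i) = sTimes C g i := by omega
      rw [ziter_sub f _ _ (by omega), hidx]
      have hbl : C i = (q, 1) := by
        have hile : i ≤ n := by omega
        simp [hC, hile]
      have h1 := hz i (by omega) 0 (by rw [hbl]; norm_num)
      rw [hbl] at h1
      simpa using h1
  choose v hv1 hv2 hv3 using HY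
  obtain ⟨y, -, ψ, hψ, hψt⟩ :=
    IsCompact.tendsto_subseq (x := v) isCompact_univ (fun n => mem_univ _)
  have hY1 : dist y q ≤ ε :=
    le_of_tendsto (hψt.dist tendsto_const_nhds)
      (Eventually.of_forall fun k => (hv1 (ψ k)).le)
  have hY2 : ∀ j : ℕ, M ≤ j → infDist ((⇑f)^[j] y) Y ≤ ε := by
    intro j hj
    have hT : Tendsto (fun k => infDist ((⇑f)^[j] (v (ψ k))) Y) atTop
        (𝓝 (infDist ((⇑f)^[j] y) Y)) :=
      (((continuous_infDist_pt Y).comp (f.continuous.iterate j)).tendsto y).comp hψt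
    refine le_of_tendsto hT (eventually_atTop.mpr ⟨j, fun k hk => ?_⟩)
    exact hv2 (ψ k) j hj (le_trans (le_trans hk hψ.le_apply) (Nat.le_succ _))
  have hY3 : ∀ B : ℕ, ∃ d : ℕ, B ≤ d ∧ dist (zIter f (-(d:ℤ)) y) q ≤ ε := by
    intro B
    by_contra hcon
    push_neg at hcon
    set B' := max B M with hB'
    have hev1 : ∀ᶠ k in atTop, ∀ c ∈ Finset.Ico B' (B' + M),
        ε < dist (zIter f (-(c:ℤ)) (v (ψ k))) q := by
      rw [eventually_all_finset]
      intro c hc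
      have hcB : B ≤ c := le_trans (le_max_left _ _) (Finset.mem_Ico.mp hc).1
      have hlt : ε < dist (zIter f (-(c:ℤ)) y) q := hcon c hcB
      have hT : Tendsto (fun k => dist (zIter f (-(c:ℤ)) (v (ψ k))) q) atTop
          (𝓝 (dist (zIter f (-(c:ℤ)) y) q)) :=
        (((ziter_continuous f (-(c:ℤ))).tendsto y).comp hψt).dist tendsto_const_nhds
      exact hT.eventually (eventually_gt_nhds hlt)
    have hev2 : ∀ᶠ k in atTop, B' ≤ ψ k :=
      eventually_atTop.mpr ⟨B', fun k hk => le_trans hk hψ.le_apply⟩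
    obtain ⟨k, h1, h2⟩ := (hev1.and hev2).exists
    obtain ⟨c, hc1, hc2, hc3⟩ := hv3 (ψ k) B' (le_max_right _ _) h2
    exact absurd hc3 (not_lt.mpr (h1 c (Finset.mem_Ico.mpr ⟨hc1, hc2⟩)).le)
  -- ===== separation facts =====
  have hDx : 3 * ε ≤ infDist x Y := hfar x hX1
  have hDy : 3 * ε ≤ infDist y Y := hfar y hY1
  have hC1 : ∀ n : ℤ, n ≠ 0 → zIter f n x ≠ x := by
    intro n hn heq
    have hpow : ((f.toEquiv ^ n : Equiv.Perm X)) x = x := by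
      rw [← ziter_eq_pow]; exact heq
    have hk : ∀ k : ℕ, ((f.toEquiv ^ n : Equiv.Perm X) ^ k) x = x := by
      intro k
      induction k with
      | zero => rfl
      | succ m ih => rw [pow_succ, Equiv.Perm.mul_apply, hpow, ih]
    have hzM : zIter f (n * M) x = x := by
      rw [ziter_eq_pow, zpow_mul, zpow_natCast]
      exact hk M
    have habs : M ≤ (n * M).natAbs := by
      rw [Int.natAbs_mul, Int.natAbs_natCast]
      have h1 : 1 ≤ n.natAbs := by omega
      nlinarith
    have h2 := hXz (n * M) habs
    rw [hzM] at h2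
    linarith
  have hC2 : ∀ n : ℕ, 0 < n → (⇑f)^[n] y ≠ y := by
    intro n hn heq
    have hiter : (⇑f)^[n * M] y = y := by
      rw [Function.iterate_mul]
      exact Function.iterate_fixed heq M
    have h2 := hY2 (n * M) (Nat.le_mul_of_pos_left M hn)
    rw [hiter] at h2
    linarith
  have hC3 : ∀ n : ℕ, (⇑f)^[n] x ≠ y := by
    intro n heq
    obtain ⟨d, hd, hdist⟩ := hY3 (M + n)
    have hfar' : 3 * ε ≤ infDist (zIter f (-(d:ℤ)) y) Y := hfar _ hdist
    have heq2 : zIter f (-(d:ℤ)) y = zIter f (-(d:ℤ) + (n:ℤ)) x := by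
      rw [← heq, ← ziter_natCast f n x, ziter_add]
    have habs : M ≤ (-(d:ℤ) + (n:ℤ)).natAbs := by omega
    rw [heq2] at hfar'
    have h2 := hXz _ habs
    linarith
  have hC4 : ∀ n : ℕ, (⇑f)^[n] y ≠ x := by
    intro n heq
    obtain ⟨d, hd, hdist⟩ := hY3 M
    have hfar' : 3 * ε ≤ infDist (zIter f (-(d:ℤ)) y) Y := hfar _ hdist
    have hy : zIter f (-(n:ℤ)) x = y := by
      rw [← heq, ← ziter_natCast f n y, ziter_add]
      simp [zIter]
    have heq2 : zIter f (-(d:ℤ)) y = zIter f (-(d:ℤ) + -(n:ℤ)) x := by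
      rw [← hy, ziter_add]
    have habs : M ≤ ((-(d:ℤ)) + -(n:ℤ)).natAbs := by omega
    rw [heq2] at hfar'
    have h2 := hXz _ habs
    linarith
  -- ===== final assembly =====
  obtain ⟨cA, hcA, hcAle⟩ := exists_pos_min ((Finset.Icc (-(M:ℤ)) (M:ℤ)).erase 0)
    (fun m => dist (zIter f m x) x)
    (fun m hm => dist_pos.mpr (hC1 m (Finset.ne_of_mem_erase hm)))
  obtain ⟨cB, hcB, hcBle⟩ := exists_pos_min (Finset.range M)
    (fun n => dist ((⇑f)^[n] x) y) (fun n _ => dist_pos.mpr (hC3 n))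
  obtain ⟨cC, hcC, hcCle⟩ := exists_pos_min (Finset.range M)
    (fun n => dist ((⇑f)^[n] y) x) (fun n _ => dist_pos.mpr (hC4 n))
  obtain ⟨cD, hcD, hcDle⟩ := exists_pos_min (Finset.Ico 1 M)
    (fun n => dist ((⇑f)^[n] y) y)
    (fun n hn => dist_pos.mpr (hC2 n (Finset.mem_Ico.mp hn).1))
  set εf : ℝ := min (min (min cA cB) (min cC cD)) (2 * ε) with hεf
  have hεfA : εf ≤ cA := le_trans (min_le_left _ _) (le_trans (min_le_left _ _) (min_le_left _ _))
  have hεfB : εf ≤ cB := le_trans (min_le_left _ _) (le_trans (min_le_left _ _) (min_le_right _ _))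
  have hεfC : εf ≤ cC := le_trans (min_le_left _ _) (le_trans (min_le_right _ _) (min_le_left _ _))
  have hεfD : εf ≤ cD := le_trans (min_le_left _ _) (le_trans (min_le_right _ _) (min_le_right _ _))
  have hεf2 : εf ≤ 2 * ε := min_le_right _ _
  have hεfpos : 0 < εf := lt_min (lt_min (lt_min hcA hcB) (lt_min hcC hcD)) (by linarith)
  refine ⟨x, y, εf, hεfpos, ?_, ?_, ?_, ?_⟩
  · intro n hn
    by_cases hM' : M ≤ n.natAbs
    · have h1 := hXz n hM'
      have h2 : infDist x Y ≤ infDist (zIter f n x) Y + dist x (zIter f n x) :=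
        infDist_le_infDist_add_dist
      rw [dist_comm] at h2
      linarith
    · have hmem' : n ∈ (Finset.Icc (-(M:ℤ)) (M:ℤ)).erase 0 := by
        rw [Finset.mem_erase, Finset.mem_Icc]
        omega
      exact le_trans hεfA (hcAle n hmem')
  · intro n
    by_cases hM' : M ≤ n
    · have h1 := hX2 n hM'
      have h2 : infDist y Y ≤ infDist ((⇑f)^[n] x) Y + dist y ((⇑f)^[n] x) :=
        infDist_le_infDist_add_dist
      rw [dist_comm] at h2
      linarith
    · exact le_trans hεfB (hcBle n (Finset.mem_range.mpr (not_le.mp hM')))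
  · intro n
    by_cases hM' : M ≤ n
    · have h1 := hY2 n hM'
      have h2 : infDist x Y ≤ infDist ((⇑f)^[n] y) Y + dist x ((⇑f)^[n] y) :=
        infDist_le_infDist_add_dist
      rw [dist_comm] at h2
      linarith
    · exact le_trans hεfC (hcCle n (Finset.mem_range.mpr (not_le.mp hM')))
  · intro n hn
    by_cases hM' : M ≤ n
    · have h1 := hY2 n hM'
      have h2 : infDist y Y ≤ infDist ((⇑f)^[n] y) Y + dist y ((⇑f)^[n] y) :=
        infDist_le_infDist_add_dist
      rw [dist_comm] at h2
      linarith
    · exact le_trans hεfD (hcDle n (Finset.mem_Ico.mpr ⟨hn, not_le.mp hM'⟩))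


end Paper
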